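/- There exists f ∈ L¹(ℝ), real, even, not identically zero, with f = f̂ and f(0) = 0, such that f(x) ≥ 0 for all |x| ≥ √(3/(2π)). Consequently A := inf A(f) over all such f satisfies A ≤ √(3/(2π)). -/

import Mathlib

open Real MeasureTheory FourierTransform

noncomputable def G : ℝ → ℂ := fun x => ((Real.exp (-π * x ^ 2) : ℝ) : ℂ)

lemma integrable_aux (n : ℕ) : Integrable (fun x : ℝ => |x| ^ n * Real.exp (-π * x ^ 2)) := by
  have h1 : Integrable (fun x : ℝ => Real.exp (-π * x ^ 2)) := integrable_exp_neg_mul_sq pi_pos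
  have h2 : Integrable (fun x : ℝ => Real.exp (-(π - 1) * x ^ 2)) :=
    integrable_exp_neg_mul_sq (by nlinarith [pi_gt_three])
  have maj : Integrable (fun x : ℝ =>
      Real.exp (-π * x ^ 2) + (n.factorial : ℝ) * Real.exp (-(π - 1) * x ^ 2)) :=
    h1.add (h2.const_mul _)
  refine maj.mono' ?_ ?_
  · exact ((continuous_abs.pow n).mul (by continuity)).aestronglyMeasurable
  · filter_upwards with x
    rw [Real.norm_of_nonneg (by positivity)]
    rcases le_total (|x|) 1 with h | h
    · have h1' : |x| ^ n ≤ 1 := pow_le_one₀ (abs_nonneg x) h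
      have := Real.exp_pos (-(π - 1) * x ^ 2)
      have hf : (1:ℝ) ≤ n.factorial := by exact_mod_cast Nat.one_le_iff_ne_zero.mpr n.factorial_ne_zero
      nlinarith [Real.exp_pos (-π * x ^ 2)]
    · have h1' : |x| ^ n ≤ (x ^ 2) ^ n := by
        calc |x| ^ n ≤ (|x| ^ 2) ^ n := by
              rw [← pow_mul]
              exact pow_le_pow_right₀ h (Nat.le_mul_of_pos_left n (by norm_num))
          _ = (x ^ 2) ^ n := by rw [sq_abs]
      have h2' : (x ^ 2) ^ n ≤ n.factorial * Real.exp (x ^ 2) := by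
        have := Real.pow_div_factorial_le_exp (x ^ 2) (sq_nonneg x) n
        have hf : (0:ℝ) < n.factorial := by exact_mod_cast n.factorial_pos
        rw [div_le_iff₀ hf] at this
        linarith [this]
      have e1 : Real.exp (x ^ 2) * Real.exp (-π * x ^ 2) = Real.exp (-(π - 1) * x ^ 2) := by
        rw [← Real.exp_add]; ring_nf
      have := Real.exp_pos (-π * x ^ 2)
      nlinarith [Real.exp_pos (-π * x ^ 2)]

lemma hasDerivAt_G (x : ℝ) : HasDerivAt G (((-2 * π * x : ℝ) : ℂ) * G x) x := by
  have h0 : HasDerivAt (fun x : ℝ => -π * x ^ 2) (-2 * π * x) x := by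
    have := (hasDerivAt_pow 2 x).const_mul (-π)
    simpa using this.congr_deriv (by ring)
  have h := (h0.ofReal_comp).cexp
  have hG : G = fun x : ℝ => Complex.exp ((-π * x ^ 2 : ℝ) : ℂ) := by
    funext x; simp [G, Complex.ofReal_exp]
  rw [hG]
  simpa [mul_comm] using h

lemma step {Q Q' : ℝ → ℝ} (hQ : ∀ x, HasDerivAt Q (Q' x) x) (x : ℝ) :
    HasDerivAt (fun x => ((Q x : ℝ) : ℂ) * G x) (((Q' x - 2 * π * x * Q x : ℝ) : ℂ) * G x) x := by
  have h := ((hQ x).ofReal_comp).fun_mul (hasDerivAt_G x)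
  refine h.congr_deriv ?_
  push_cast
  ring

lemma dQ1 (x : ℝ) : HasDerivAt (fun x : ℝ => ((-2 * π * x : ℝ) : ℂ) * G x)
    (((4 * π ^ 2 * x ^ 2 - 2 * π : ℝ) : ℂ) * G x) x := by
  have hQ : ∀ x : ℝ, HasDerivAt (fun x : ℝ => -2 * π * x) (-2 * π) x := fun x => by
    simpa using (hasDerivAt_id x).const_mul (-2 * π)
  have := step hQ x
  convert this using 3
  ring

lemma dQ2 (x : ℝ) : HasDerivAt (fun x : ℝ => ((4 * π ^ 2 * x ^ 2 - 2 * π : ℝ) : ℂ) * G x)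
    (((-8 * π ^ 3 * x ^ 3 + 12 * π ^ 2 * x : ℝ) : ℂ) * G x) x := by
  have hQ : ∀ x : ℝ, HasDerivAt (fun x : ℝ => 4 * π ^ 2 * x ^ 2 - 2 * π) (8 * π ^ 2 * x) x :=
    fun x => by
      have := ((hasDerivAt_pow 2 x).const_mul (4 * π ^ 2)).sub_const (2 * π)
      simpa using this.congr_deriv (by ring)
  have := step hQ x
  convert this using 3
  ring

lemma dQ3 (x : ℝ) : HasDerivAt (fun x : ℝ => ((-8 * π ^ 3 * x ^ 3 + 12 * π ^ 2 * x : ℝ) : ℂ) * G x)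
    (((16 * π ^ 4 * x ^ 4 - 48 * π ^ 3 * x ^ 2 + 12 * π ^ 2 : ℝ) : ℂ) * G x) x := by
  have hQ : ∀ x : ℝ, HasDerivAt (fun x : ℝ => -8 * π ^ 3 * x ^ 3 + 12 * π ^ 2 * x)
      (-24 * π ^ 3 * x ^ 2 + 12 * π ^ 2) x := fun x => by
    have := ((hasDerivAt_pow 3 x).const_mul (-8 * π ^ 3)).fun_add
      (((hasDerivAt_id x).const_mul (12 * π ^ 2)))
    simpa using this.congr_deriv (by ring)
  have := step hQ x
  convert this using 3
  ring

lemma deriv_G_eq : deriv G = fun x : ℝ => ((-2 * π * x : ℝ) : ℂ) * G x :=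
  funext fun x => (hasDerivAt_G x).deriv

lemma iter2_G : iteratedDeriv 2 G = fun y : ℝ => ((4 * π ^ 2 * y ^ 2 - 2 * π : ℝ) : ℂ) * G y := by
  rw [iteratedDeriv_succ, iteratedDeriv_one, deriv_G_eq]
  exact funext fun x => (dQ1 x).deriv

lemma iter4_G : iteratedDeriv 4 G =
    fun y : ℝ => ((16 * π ^ 4 * y ^ 4 - 48 * π ^ 3 * y ^ 2 + 12 * π ^ 2 : ℝ) : ℂ) * G y := by
  rw [show (4 : ℕ) = 2 + 1 + 1 by rfl, iteratedDeriv_succ, iteratedDeriv_succ, iter2_G]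
  rw [funext fun x => (dQ2 x).deriv]
  exact funext fun x => (dQ3 x).deriv

lemma fourier_G : 𝓕 G = G := by
  have h := fourier_gaussian_pi (b := 1) (by norm_num)
  have hG : G = fun x : ℝ => Complex.exp (-(π : ℂ) * 1 * (x : ℂ) ^ 2) := by
    funext x; rw [show (-(π : ℂ) * 1 * (x : ℂ) ^ 2) = ((-π * x ^ 2 : ℝ) : ℂ) by push_cast; ring]; simp [G, Complex.ofReal_exp]
  rw [hG, h]
  funext t
  norm_num

lemma integrable_pow_G (n : ℕ) : Integrable (fun x : ℝ => x ^ n • G x) := by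
  refine (integrable_aux n).mono' ?_ ?_
  · apply Continuous.aestronglyMeasurable
    exact (continuous_pow n).smul (Complex.continuous_ofReal.comp (by continuity))
  · filter_upwards with x
    simp [G, norm_smul, abs_pow, abs_of_pos (Real.exp_pos _), Complex.norm_exp, ← Complex.ofReal_pow, le_refl]

lemma fourier_monomial (n : ℕ) (hn : (n : ℕ∞) ≤ 4) :
    𝓕 (fun x : ℝ => (-2 * π * Complex.I * x) ^ n • G x) = iteratedDeriv n G := by
  have h := Real.iteratedDeriv_fourier (f := G) (N := 4)
    (fun k _ => integrable_pow_G k) hn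
  rw [fourier_G] at h
  exact h.symm

lemma integrable_monomial (n : ℕ) :
    Integrable (fun x : ℝ => (-2 * π * Complex.I * x) ^ n • G x) := by
  have h := ((integrable_pow_G n).smul ((-2 * π * Complex.I) ^ n))
  refine h.congr (Filter.Eventually.of_forall fun x => ?_)
  simp only [Pi.smul_apply, smul_smul, smul_eq_mul, mul_pow, Complex.real_smul, Complex.ofReal_pow]
  ring

noncomputable def fR : ℝ → ℝ := fun x => x ^ 2 * (x ^ 2 - 3 / (2 * π)) * Real.exp (-π * x ^ 2)

lemma fc_decomp : (fun x : ℝ => ((fR x : ℝ) : ℂ)) =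
    (1 / (16 * (π : ℂ) ^ 4)) • (fun x : ℝ => (-2 * π * Complex.I * x) ^ 4 • G x) +
    (3 / (8 * (π : ℂ) ^ 3)) • (fun x : ℝ => (-2 * π * Complex.I * x) ^ 2 • G x) := by
  have hπ : (π : ℂ) ≠ 0 := Complex.ofReal_ne_zero.mpr pi_ne_zero
  funext x
  simp only [Pi.add_apply, Pi.smul_apply, smul_eq_mul, fR, G, Complex.ofReal_exp,
    Complex.ofReal_neg, Complex.ofReal_mul, Complex.ofReal_pow, Complex.ofReal_sub,
    Complex.ofReal_div, Complex.ofReal_ofNat]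
  field_simp
  linear_combination (256 * (x:ℂ) ^ 4 * (π:ℂ) * (1 - Complex.I ^ 2) - 384 * (x:ℂ) ^ 2)
    * Complex.I_sq

lemma fourier_fR (y : ℝ) : 𝓕 (fun x : ℝ => ((fR x : ℝ) : ℂ)) y
    = ((fR y : ℝ) : ℂ) := by
  have hπ : (π : ℂ) ≠ 0 := Complex.ofReal_ne_zero.mpr pi_ne_zero
  have hL : Continuous fun p : ℝ × ℝ => (innerₗ ℝ) p.1 p.2 := continuous_inner
  set A4 : ℝ → ℂ := fun x : ℝ => (-2 * π * Complex.I * x) ^ 4 • G x with hA4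
  set A2 : ℝ → ℂ := fun x : ℝ => (-2 * π * Complex.I * x) ^ 2 • G x with hA2
  have hadd : 𝓕 ((1 / (16 * (π : ℂ) ^ 4)) • A4 + (3 / (8 * (π : ℂ) ^ 3)) • A2) =
      𝓕 ((1 / (16 * (π : ℂ) ^ 4)) • A4) + 𝓕 ((3 / (8 * (π : ℂ) ^ 3)) • A2) :=
    VectorFourier.fourierIntegral_add Real.continuous_fourierChar hL
      ((integrable_monomial 4).smul _) ((integrable_monomial 2).smul _)
  have hs4 : 𝓕 ((1 / (16 * (π : ℂ) ^ 4)) • A4) = (1 / (16 * (π : ℂ) ^ 4)) • 𝓕 A4 :=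
    VectorFourier.fourierIntegral_const_smul _ _ _ _ _
  have hs2 : 𝓕 ((3 / (8 * (π : ℂ) ^ 3)) • A2) = (3 / (8 * (π : ℂ) ^ 3)) • 𝓕 A2 :=
    VectorFourier.fourierIntegral_const_smul _ _ _ _ _
  have h4 : 𝓕 A4 = iteratedDeriv 4 G := fourier_monomial 4 (by norm_num)
  have h2 : 𝓕 A2 = iteratedDeriv 2 G := fourier_monomial 2 (by norm_num)
  calc 𝓕 (fun x : ℝ => ((fR x : ℝ) : ℂ)) y
      = 𝓕 ((1 / (16 * (π : ℂ) ^ 4)) • A4 + (3 / (8 * (π : ℂ) ^ 3)) • A2) y := by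
        rw [← fc_decomp]
    _ = (1 / (16 * (π : ℂ) ^ 4)) • iteratedDeriv 4 G y
        + (3 / (8 * (π : ℂ) ^ 3)) • iteratedDeriv 2 G y := by
        rw [hadd]; simp only [Pi.add_apply]
        rw [hs4, hs2, h4, h2]; simp only [Pi.smul_apply]
    _ = ((fR y : ℝ) : ℂ) := by
        rw [iter4_G, iter2_G]
        simp only [fR, G, smul_eq_mul, Complex.ofReal_exp, Complex.ofReal_neg,
          Complex.ofReal_mul, Complex.ofReal_pow, Complex.ofReal_sub, Complex.ofReal_div,
          Complex.ofReal_ofNat, Complex.ofReal_add]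
        field_simp
        ring

lemma fR_integrable : Integrable fR := by
  have h4 : Integrable (fun x : ℝ => x ^ 4 * Real.exp (-π * x ^ 2)) := by
    refine (integrable_aux 4).congr (Filter.Eventually.of_forall fun x => ?_)
    show |x| ^ 4 * Real.exp (-π * x ^ 2) = x ^ 4 * Real.exp (-π * x ^ 2)
    rw [← abs_pow, abs_of_nonneg (by positivity : (0:ℝ) ≤ x ^ 4)]
  have h2 : Integrable (fun x : ℝ => x ^ 2 * Real.exp (-π * x ^ 2)) := by
    refine (integrable_aux 2).congr (Filter.Eventually.of_forall fun x => ?_)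
    show |x| ^ 2 * Real.exp (-π * x ^ 2) = x ^ 2 * Real.exp (-π * x ^ 2)
    rw [← abs_pow, abs_of_nonneg (by positivity : (0:ℝ) ≤ x ^ 2)]
  refine (h4.sub (h2.const_mul (3 / (2 * π)))).congr (Filter.Eventually.of_forall fun x => ?_)
  simp only [Pi.sub_apply, fR]
  ring

lemma fR_props :
    Integrable fR ∧ (∀ x, fR (-x) = fR x) ∧ fR ≠ 0 ∧
      (∀ y, 𝓕 (fun x => (fR x : ℂ)) y = (fR y : ℂ)) ∧ fR 0 = 0 ∧
      ∀ x : ℝ, Real.sqrt (3 / (2 * π)) ≤ |x| → 0 ≤ fR x := by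
  refine ⟨fR_integrable, ?_, ?_, fun y => fourier_fR y, by simp [fR], ?_⟩
  · intro x
    have h : (-x) ^ 2 = x ^ 2 := by ring
    simp only [fR, h]
  · intro h
    have h1 : fR 1 = 0 := congrFun h 1
    have h3 : 3 / (2 * π) < 1 := by
      rw [div_lt_one (by positivity)]
      nlinarith [pi_gt_three]
    have hval : fR 1 = (1 - 3 / (2 * π)) * Real.exp (-π) := by
      norm_num [fR]
    rw [h1] at hval
    nlinarith [Real.exp_pos (-π)]
  · intro x hx
    have h1 : Real.sqrt (3 / (2 * π)) ^ 2 ≤ |x| ^ 2 := by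
      apply pow_le_pow_left₀ (Real.sqrt_nonneg _) hx
    rw [Real.sq_sqrt (by positivity), sq_abs] at h1
    have := Real.exp_pos (-π * x ^ 2)
    have h2 : 0 ≤ x ^ 2 - 3 / (2 * π) := by linarith
    simp only [fR]
    positivity

/-- There exists a real, even, nonzero `f ∈ L¹(ℝ)` with `f = f̂`, `f 0 = 0`, and
`f ≥ 0` on `{|x| ≥ √(3/(2π))}`; consequently the infimum of the radii `r` beyond
which such a function can be nonnegative is at most `√(3/(2π))`. -/
theorem stmt_9 :
    (∃ f : ℝ → ℝ, Integrable f ∧ (∀ x, f (-x) = f x) ∧ f ≠ 0 ∧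
      (∀ y, FourierTransform.fourier (fun x => (f x : ℂ)) y = (f y : ℂ)) ∧ f 0 = 0 ∧
      ∀ x : ℝ, Real.sqrt (3 / (2 * π)) ≤ |x| → 0 ≤ f x) ∧
    sInf {r : ℝ | 0 < r ∧ ∃ f : ℝ → ℝ, Integrable f ∧ (∀ x, f (-x) = f x) ∧ f ≠ 0 ∧
        (∀ y, FourierTransform.fourier (fun x => (f x : ℂ)) y = (f y : ℂ)) ∧ f 0 = 0 ∧
        ∀ x : ℝ, r ≤ |x| → 0 ≤ f x}
      ≤ Real.sqrt (3 / (2 * π)) := by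
  constructor
  · exact ⟨fR, fR_props⟩
  · apply csInf_le
    · exact ⟨0, fun r hr => hr.1.le⟩
    · exact ⟨Real.sqrt_pos.mpr (by positivity), fR, fR_props⟩
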